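/- arXiv:2410.06332 — 4 statements merged into one kernel-verified Lean document; each statement's English description precedes it below -/
import Mathlib

section
/- If the subgraph of the Boolean hypercube graph induced by the models of a Boolean function f has m connected components, then any BNN representation (P,N) of f contains at least one positive prototype in each such connected component, hence |P| >= m. -/
/-- (P,N) is a Boolean Nearest Neighbor representation of f. -/
def IsBNN {n : ℕ} (f : (Fin n → Bool) → Bool)
    (P N : Finset (Fin n → Bool)) : Prop :=
  Disjoint P N ∧
  (∀ a, f a = true → ∃ b ∈ P, ∀ c ∈ N, hammingDist a b < hammingDist a c) ∧
  (∀ a, f a = false → ∃ b ∈ N, ∀ c ∈ P, hammingDist a b < hammingDist a c)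

open Finset in
lemma hd_update {n : ℕ} (a b : Fin n → Bool) (i : Fin n) (h : a i ≠ b i) :
    hammingDist a (Function.update a i (b i)) = 1 ∧
    hammingDist (Function.update a i (b i)) b + 1 = hammingDist a b := by
  constructor
  · rw [hammingDist]
    have : ({j | a j ≠ Function.update a i (b i) j} : Finset (Fin n)) = {i} := by
      ext j
      simp only [mem_filter, mem_univ, true_and, mem_singleton, Finset.mem_singleton]
      constructor
      · intro hj
        by_contra hji
        rw [Function.update_of_ne hji] at hj
        exact hj rfl
      · rintro rfl; simpa using h
    rw [this, card_singleton]
  · rw [hammingDist, hammingDist]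
    have : ({j | Function.update a i (b i) j ≠ b j} : Finset (Fin n)) =
        ({j | a j ≠ b j} : Finset (Fin n)).erase i := by
      ext j
      simp only [mem_filter, mem_univ, true_and, mem_erase]
      rcases eq_or_ne j i with rfl | hji
      · simp
      · rw [Function.update_of_ne hji]; simp [hji]
    rw [this, Finset.card_erase_of_mem (by simp [h])]
    have : 0 < #{j | a j ≠ b j} := Finset.card_pos.2 ⟨i, by simp [h]⟩
    omega

lemma key {n : ℕ} (f : (Fin n → Bool) → Bool)
    (G : SimpleGraph {x : Fin n → Bool // f x = true})
    (hG : ∀ a b, G.Adj a b ↔ hammingDist a.1 b.1 = 1)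
    (P N : Finset (Fin n → Bool)) (hPN : IsBNN f P N) :
    ∀ k (a : Fin n → Bool) (ha : f a = true) (b : Fin n → Bool), b ∈ P →
      (∀ c ∈ N, hammingDist a b < hammingDist a c) → hammingDist a b ≤ k →
      ∃ p, ∃ hp : f p = true, p ∈ P ∧
        G.connectedComponentMk ⟨p, hp⟩ = G.connectedComponentMk ⟨a, ha⟩ := by
  intro k
  induction k with
  | zero =>
    intro a ha b hb hw hk
    have : a = b := (hammingDist_eq_zero.1 (Nat.le_zero.1 hk)).symm ▸ rfl
    have hab : a = b := eq_of_hammingDist_eq_zero (Nat.le_zero.1 hk)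
    exact ⟨a, ha, hab ▸ hb, rfl⟩
  | succ k ih =>
    intro a ha b hb hw hk
    rcases Nat.eq_zero_or_pos (hammingDist a b) with h0 | h0
    · have hab : a = b := eq_of_hammingDist_eq_zero h0
      exact ⟨a, ha, hab ▸ hb, rfl⟩
    · have hne : a ≠ b := hammingDist_ne_zero.1 h0.ne'
      obtain ⟨i, hi⟩ := Function.ne_iff.1 hne
      set a' := Function.update a i (b i) with ha'def
      obtain ⟨hd1, hd2⟩ := hd_update a b i hi
      rw [← ha'def] at hd1 hd2
      -- f a' = true
      have ha' : f a' = true := by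
        by_contra hfa'
        have hfa' : f a' = false := by simpa using hfa'
        obtain ⟨c, hcN, hc⟩ := hPN.2.2 a' hfa'
        have h1 : hammingDist a' c < hammingDist a' b := hc b hb
        have h2 : hammingDist a c ≤ hammingDist a a' + hammingDist a' c :=
          hammingDist_triangle a a' c
        have h3 : hammingDist a b < hammingDist a c := hw c hcN
        omega
      -- b is still a witness for a'
      have hw' : ∀ c ∈ N, hammingDist a' b < hammingDist a' c := by
        intro c hcN
        have h2 : hammingDist a c ≤ hammingDist a a' + hammingDist a' c :=
          hammingDist_triangle a a' c
        have h3 : hammingDist a b < hammingDist a c := hw c hcN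
        omega
      obtain ⟨p, hp, hpP, hpc⟩ := ih a' ha' b hb hw' (by omega)
      refine ⟨p, hp, hpP, hpc.trans ?_⟩
      apply SimpleGraph.ConnectedComponent.sound
      have hadj : G.Adj ⟨a', ha'⟩ ⟨a, ha⟩ := by
        rw [hG]
        simpa [hammingDist_comm] using hd1
      exact hadj.reachable

/-- any BNN representation of f has a positive prototype in each
connected component of the subgraph of the hypercube induced by the models of f,
hence at least as many positive prototypes as components. -/
theorem bnn_positive_prototype_per_component (n : ℕ)
    (f : (Fin n → Bool) → Bool)
    (G : SimpleGraph {x : Fin n → Bool // f x = true})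
    (hG : ∀ a b, G.Adj a b ↔ hammingDist a.1 b.1 = 1)
    (P N : Finset (Fin n → Bool)) (hPN : IsBNN f P N) :
    (∀ C : G.ConnectedComponent,
      ∃ p, ∃ hp : f p = true, p ∈ P ∧ G.connectedComponentMk ⟨p, hp⟩ = C) ∧
    Nat.card G.ConnectedComponent ≤ P.card := by
  have hmain : ∀ C : G.ConnectedComponent,
      ∃ p, ∃ hp : f p = true, p ∈ P ∧ G.connectedComponentMk ⟨p, hp⟩ = C := by
    intro C
    obtain ⟨⟨a, ha⟩, rfl⟩ := C.exists_rep
    obtain ⟨b, hbP, hw⟩ := hPN.2.1 a ha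
    exact key f G hG P N hPN (hammingDist a b) a ha b hbP hw le_rfl
  refine ⟨hmain, ?_⟩
  classical
  have : Nat.card {x // x ∈ P} = P.card := Nat.card_eq_finsetCard P
  rw [← this]
  apply Nat.card_le_card_of_injective
    (f := fun C : G.ConnectedComponent =>
      (⟨(hmain C).choose, (hmain C).choose_spec.choose_spec.1⟩ : {x // x ∈ P}))
  intro C1 C2 h
  have hc1 := (hmain C1).choose_spec.choose_spec.2
  have hc2 := (hmain C2).choose_spec.choose_spec.2
  simp only [Subtype.mk.injEq] at h
  rw [← hc1, ← hc2]
  congr 1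
  exact Subtype.ext h
end

section
/- If x is a positive vector of a Boolean function f (i.e. f(x)=1) such that every vector at Hamming distance 1 from x satisfies f(y)=0, then x must belong to the set P of positive prototypes in any BNN representation (P,N) of f. -/
lemma flip_dist {n : ℕ} (x b : Fin n → Bool) (i : Fin n) (hi : x i ≠ b i) :
    hammingDist (Function.update x i (!x i)) b + 1 = hammingDist x b := by
  classical
  unfold hammingDist
  have hset : (Finset.univ.filter fun j => x j ≠ b j)
      = insert i (Finset.univ.filter fun j => Function.update x i (!x i) j ≠ b j) := by
    ext j
    by_cases hj : j = i
    · subst hj; simp [hi]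
    · simp [Function.update_of_ne hj, hj]
  have hnot : i ∉ (Finset.univ.filter fun j => Function.update x i (!x i) j ≠ b j) := by
    simp only [Finset.mem_filter, Finset.mem_univ, true_and]
    simp only [Function.update_self]
    revert hi; cases x i <;> cases b i <;> simp
  rw [hset, Finset.card_insert_of_notMem hnot]

lemma flip_dist_one {n : ℕ} (x : Fin n → Bool) (i : Fin n) :
    hammingDist x (Function.update x i (!x i)) = 1 := by
  classical
  unfold hammingDist
  have : (Finset.univ.filter fun j => x j ≠ Function.update x i (!x i) j) = {i} := by
    ext j
    by_cases hj : j = i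
    · subst hj; simp only [Function.update_self, Finset.mem_filter, Finset.mem_univ,
        Finset.mem_singleton, true_and]
      constructor
      · intro; trivial
      · intro; cases x j <;> simp
    · simp [Function.update_of_ne hj, hj]
  rw [this, Finset.card_singleton]

/-- an isolated positive vector of f must be a positive prototype
in any BNN representation of f. -/
theorem isolated_model_mem_positive_prototypes (n : ℕ)
    (f : (Fin n → Bool) → Bool) (x : Fin n → Bool)
    (hx : f x = true)
    (hiso : ∀ y : Fin n → Bool, hammingDist x y = 1 → f y = false)
    (P N : Finset (Fin n → Bool)) (hPN : IsBNN f P N) :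
    x ∈ P := by
  classical
  obtain ⟨hdisj, hpos, hneg⟩ := hPN
  obtain ⟨b, hbP, hb⟩ := hpos x hx
  by_cases hxb : x = b
  · exact hxb ▸ hbP
  · exfalso
    obtain ⟨i, hi⟩ := Function.ne_iff.mp hxb
    set y := Function.update x i (!x i) with hy
    have hxy : hammingDist x y = 1 := flip_dist_one x i
    have hyb : hammingDist y b + 1 = hammingDist x b := flip_dist x b i hi
    obtain ⟨c, hcN, hc⟩ := hneg y (hiso y hxy)
    have h1 : hammingDist x b < hammingDist x c := hb c hcN
    have h2 : hammingDist y c < hammingDist y b := hc b hbP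
    have h3 : hammingDist x c ≤ hammingDist x y + hammingDist y c :=
      hammingDist_triangle x y c
    omega
end

section
/- Every BNN representation of the parity function on n variables consists of exactly all 2^n Boolean vectors as prototypes: P is the set of vectors of odd weight and N is the set of vectors of even weight. In particular BNN(PAR_n) = 2^n. -/
/-- The weight (number of ones) of a Boolean vector. -/
def wt {n : ℕ} (x : Fin n → Bool) : ℕ :=
  (Finset.univ.filter (fun i => x i = true)).card

lemma wt_update_flip {n : ℕ} (a : Fin n → Bool) (i : Fin n) :
    wt (Function.update a i (!a i)) % 2 ≠ wt a % 2 := by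
  unfold wt
  cases h : a i with
  | false =>
    simp only [Bool.not_false]
    have : (Finset.univ.filter (fun j => Function.update a i true j = true))
        = insert i (Finset.univ.filter (fun j => a j = true)) := by
      ext j
      by_cases hj : j = i <;> simp [Function.update, hj, h]
    rw [this, Finset.card_insert_of_notMem (by simp [h])]
    omega
  | true =>
    simp only [Bool.not_true]
    have hmem : i ∈ Finset.univ.filter (fun j => a j = true) := by simp [h]
    have : (Finset.univ.filter (fun j => Function.update a i false j = true))
        = (Finset.univ.filter (fun j => a j = true)).erase i := by
      ext j
      by_cases hj : j = i <;> simp [Function.update, hj, h]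
    rw [this, Finset.card_erase_of_mem hmem]
    have := Finset.card_pos.mpr ⟨i, hmem⟩
    omega

lemma hd_self_update {n : ℕ} (a : Fin n → Bool) (i : Fin n) (v : Bool) (hv : v ≠ a i) :
    hammingDist a (Function.update a i v) = 1 := by
  unfold hammingDist
  have : (Finset.univ.filter (fun j => a j ≠ Function.update a i v j)) = {i} := by
    ext j
    by_cases hj : j = i <;> simp [Function.update, hj, Ne.symm hv]
  rw [this]; simp

lemma hd_update_toward {n : ℕ} (a b : Fin n → Bool) (i : Fin n) (hi : a i ≠ b i) :
    hammingDist (Function.update a i (b i)) b = hammingDist a b - 1 := by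
  unfold hammingDist
  have hmem : i ∈ Finset.univ.filter (fun j => a j ≠ b j) := by simp [hi]
  have : (Finset.univ.filter (fun j => Function.update a i (b i) j ≠ b j))
      = (Finset.univ.filter (fun j => a j ≠ b j)).erase i := by
    ext j
    by_cases hj : j = i <;> simp [Function.update, hj]
  rw [this, Finset.card_erase_of_mem hmem]

/-- every BNN representation of the parity function PAR_n uses all
2^n Boolean vectors as prototypes: P is exactly the odd-weight vectors, N is
exactly the even-weight vectors, and |P|+|N| = 2^n. -/
theorem parity_unique_bnn (n : ℕ) (P N : Finset (Fin n → Bool))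
    (hPN : IsBNN (fun x => decide (wt x % 2 = 1)) P N) :
    P = Finset.univ.filter (fun x => wt x % 2 = 1) ∧
    N = Finset.univ.filter (fun x => wt x % 2 = 0) ∧
    P.card + N.card = 2 ^ n := by
  obtain ⟨hdisj, hP, hN⟩ := hPN
  have hmemP : ∀ a : Fin n → Bool, wt a % 2 = 1 → a ∈ P := by
    intro a ha
    obtain ⟨b, hbP, hb⟩ := hP a (by simp [ha])
    by_cases hab : a = b
    · exact hab ▸ hbP
    · exfalso
      obtain ⟨i, hi⟩ := Function.ne_iff.mp hab
      set a' := Function.update a i (b i) with ha'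
      have hflip : wt a' % 2 = 0 := by
        have := wt_update_flip a i
        have hb' : b i = !a i := by
          cases hai : a i <;> cases hbi : b i <;> simp_all
        rw [ha', hb']
        omega
      obtain ⟨c, hcN, hc⟩ := hN a' (by simp [hflip])
      have h1 : hammingDist a a' = 1 := hd_self_update a i (b i) (Ne.symm hi)
      have h2 : hammingDist a' b = hammingDist a b - 1 := hd_update_toward a b i hi
      have h3 : 1 ≤ hammingDist a b := by
        rcases Nat.eq_zero_or_pos (hammingDist a b) with h | h
        · exact absurd (hammingDist_eq_zero.mp h) hab
        · exact h
      have h4 := hc b hbP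
      have h5 := hb c hcN
      have h6 := hammingDist_triangle a a' c
      omega
  have hmemN : ∀ a : Fin n → Bool, wt a % 2 = 0 → a ∈ N := by
    intro a ha
    obtain ⟨b, hbN, hb⟩ := hN a (by simp [ha])
    by_cases hab : a = b
    · exact hab ▸ hbN
    · exfalso
      obtain ⟨i, hi⟩ := Function.ne_iff.mp hab
      set a' := Function.update a i (b i) with ha'
      have hflip : wt a' % 2 = 1 := by
        have := wt_update_flip a i
        have hb' : b i = !a i := by
          cases hai : a i <;> cases hbi : b i <;> simp_all
        rw [ha', hb']
        omega
      obtain ⟨c, hcP, hc⟩ := hP a' (by simp [hflip])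
      have h1 : hammingDist a a' = 1 := hd_self_update a i (b i) (Ne.symm hi)
      have h2 : hammingDist a' b = hammingDist a b - 1 := hd_update_toward a b i hi
      have h3 : 1 ≤ hammingDist a b := by
        rcases Nat.eq_zero_or_pos (hammingDist a b) with h | h
        · exact absurd (hammingDist_eq_zero.mp h) hab
        · exact h
      have h4 := hc b hbN
      have h5 := hb c hcP
      have h6 := hammingDist_triangle a a' c
      omega
  have hPeq : P = Finset.univ.filter (fun x => wt x % 2 = 1) := by
    ext x
    simp only [Finset.mem_filter, Finset.mem_univ, true_and]
    constructor
    · intro hx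
      by_contra h
      have : wt x % 2 = 0 := by omega
      exact Finset.disjoint_left.mp hdisj hx (hmemN x this)
    · exact hmemP x
  have hNeq : N = Finset.univ.filter (fun x => wt x % 2 = 0) := by
    ext x
    simp only [Finset.mem_filter, Finset.mem_univ, true_and]
    constructor
    · intro hx
      by_contra h
      have : wt x % 2 = 1 := by omega
      exact Finset.disjoint_left.mp hdisj (hmemP x this) hx
    · exact hmemN x
  refine ⟨hPeq, hNeq, ?_⟩
  rw [hPeq, hNeq]
  have : (Finset.univ.filter (fun x : Fin n → Bool => wt x % 2 = 0))
      = Finset.univ.filter (fun x => ¬ (wt x % 2 = 1)) := by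
    apply Finset.filter_congr
    intro x _
    constructor <;> intro h <;> omega
  rw [this, Finset.card_filter_add_card_filter_not]
  simp [Fintype.card_fun]
end

section
/- For Boolean vectors q, q', x in {0,1}^n, suppose q' agrees with x on the first k coordinates and agrees with q on the last n-k coordinates, and x agrees with q' on the first k coordinates. If d_H(p, q') < d_H(q, q') for some vector p, then d_H(p, x) < d_H(q, x). (Projection lemma underlying the implicant-check algorithm.) -/
/-- projection lemma: if q' agrees with x on the first k
coordinates and with q on the remaining coordinates, then any vector p that is
strictly Hamming-closer to q' than q is also strictly Hamming-closer to x
than q. -/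
theorem projection_lemma (n k : ℕ) (q q' x p : Fin n → Bool)
    (h1 : ∀ i : Fin n, (i : ℕ) < k → q' i = x i)
    (h2 : ∀ i : Fin n, k ≤ (i : ℕ) → q' i = q i)
    (hp : hammingDist p q' < hammingDist q q') :
    hammingDist p x < hammingDist q x := by
  have key : hammingDist q x = hammingDist q q' + hammingDist q' x := by
    simp only [hammingDist, Finset.card_filter]
    rw [← Finset.sum_add_distrib]
    refine Finset.sum_congr rfl fun i _ => ?_
    rcases lt_or_ge (i : ℕ) k with h | h
    · have := h1 i h
      rw [this]
      simp
    · have := h2 i h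
      rw [this]
      simp
  calc hammingDist p x ≤ hammingDist p q' + hammingDist q' x := hammingDist_triangle p q' x
    _ < hammingDist q q' + hammingDist q' x := by omega
    _ = hammingDist q x := key.symm
end
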